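/- Fix ε > 0 and p > 0. There exists d₀ > 0 such that for every real d ≥ d₀ there exist c > 0 and n₀ such that for every n ≥ n₀ and every fixed subset S of L ∪ R with |S∩L| ≤ p·(log d/d)·n and |S∩R| ≤ p·(log d/d)·n, the probability that G^{bip}_{n,d} contains an independent set S′ with |S′∩S∩L| ≥ ε·(log d/d)·n and |S′∩S∩R| ≥ ε·(log d/d)·n is at most exp(−c·n). -/

import Mathlib

open MeasureTheory Real Filter

noncomputable section

/-- Bernoulli measure on `Bool` with success probability `p`. -/
def coin (p : ℝ) : Measure Bool :=
  ENNReal.ofReal p • Measure.dirac true + ENNReal.ofReal (1 - p) • Measure.dirac false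

/-- The random bipartite graph `G^bip_{n,d}`, as a product (Bernoulli(d/n)) measure on
edge-indicator vectors indexed by the `n * n` possible edges. -/
def edgeMeasure (n : ℕ) (d : ℝ) : Measure (Fin (n * n) → Bool) :=
  Measure.pi fun _ => coin (d / n)

/-- Vertex set: the left class `L` is `Sum.inl`, the right class `R` is `Sum.inr`. -/
abbrev Vtx (n : ℕ) := Fin n ⊕ Fin n

/-- Adjacency in the bipartite graph with edge-indicator vector `A`:
`i ∈ L` and `j ∈ R` are adjacent iff the indicator of the edge `(i,j)` is `true`. -/
def adjB (n : ℕ) (A : Fin (n * n) → Bool) : Vtx n → Vtx n → Prop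
  | Sum.inl i, Sum.inr j => A (finProdFinEquiv (i, j)) = true
  | Sum.inr j, Sum.inl i => A (finProdFinEquiv (i, j)) = true
  | _, _ => False

/-- `S` is an independent set of the bipartite graph encoded by `A`. -/
def IsIndepSet (n : ℕ) (A : Fin (n * n) → Bool) (S : Set (Vtx n)) : Prop :=
  ∀ u ∈ S, ∀ v ∈ S, ¬ adjB n A u v

/-- `S ∩ L`. -/
def leftPart {n : ℕ} (S : Set (Vtx n)) : Set (Vtx n) := S ∩ Set.range Sum.inl

/-- `S ∩ R`. -/
def rightPart {n : ℕ} (S : Set (Vtx n)) : Set (Vtx n) := S ∩ Set.range Sum.inr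

/-- `S` is `γ`-balanced: `| |S ∩ L| - γ|S| | < 1`. -/
def IsBalanced (γ : ℝ) {n : ℕ} (S : Set (Vtx n)) : Prop :=
  |((leftPart S).ncard : ℝ) - γ * (S.ncard : ℝ)| < 1


instance (p : ℝ) : SigmaFinite (coin p) := by
  have : IsFiniteMeasure (coin p) := by
    constructor
    simp [coin]
  infer_instance

lemma coin_false (q : ℝ) : coin q {false} = ENNReal.ofReal (1 - q) := by
  simp [coin, Measure.dirac_apply' _ (by trivial : MeasurableSet ({false} : Set Bool))]

lemma coin_univ (q : ℝ) (h0 : 0 ≤ q) (h1 : q ≤ 1) : coin q Set.univ = 1 := by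
  have : coin q Set.univ = ENNReal.ofReal q + ENNReal.ofReal (1 - q) := by
    simp [coin]
  rw [this, ← ENNReal.ofReal_add h0 (by linarith)]
  norm_num

lemma cylinder_measure (n : ℕ) (d : ℝ) (h0 : 0 ≤ d / n) (h1 : d / n ≤ 1)
    (E : Finset (Fin (n * n))) :
    edgeMeasure n d {A | ∀ e ∈ E, A e = false} = ENNReal.ofReal (1 - d / n) ^ E.card := by
  classical
  have hset : {A : Fin (n*n) → Bool | ∀ e ∈ E, A e = false} =
      Set.univ.pi (fun e => if e ∈ E then ({false} : Set Bool) else Set.univ) := by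
    ext A
    simp only [Set.mem_setOf_eq, Set.mem_pi, Set.mem_univ, forall_true_left]
    constructor
    · intro h e
      by_cases he : e ∈ E <;> simp [he, h e]
    · intro h e he
      have := h e
      simp [he] at this
      exact this
  rw [edgeMeasure, hset, Measure.pi_pi]
  have : ∀ e : Fin (n*n), coin (d/n) (if e ∈ E then ({false} : Set Bool) else Set.univ)
      = if e ∈ E then ENNReal.ofReal (1 - d/n) else 1 := by
    intro e
    by_cases he : e ∈ E
    · simp [he, coin_false]
    · simp only [he, if_false]; exact coin_univ _ h0 h1
  simp only [this]
  rw [Finset.prod_ite_mem, Finset.univ_inter, Finset.prod_const]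

open scoped ENNReal

lemma leftPart_ncard_eq {n : ℕ} (S : Set (Vtx n)) :
    (leftPart S).ncard = {i : Fin n | Sum.inl i ∈ S}.ncard := by
  have : leftPart S = Sum.inl '' {i : Fin n | Sum.inl i ∈ S} := by
    ext u
    cases u with
    | inl i => simp [leftPart]
    | inr j => simp [leftPart]
  rw [this, Set.ncard_image_of_injective _ Sum.inl_injective]

lemma rightPart_ncard_eq {n : ℕ} (S : Set (Vtx n)) :
    (rightPart S).ncard = {j : Fin n | Sum.inr j ∈ S}.ncard := by
  have : rightPart S = Sum.inr '' {j : Fin n | Sum.inr j ∈ S} := by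
    ext u
    cases u with
    | inl i => simp [rightPart]
    | inr j => simp [rightPart]
  rw [this, Set.ncard_image_of_injective _ Sum.inr_injective]

set_option maxHeartbeats 1000000 in
/-- Fix `ε > 0` and `p > 0`. There exists `d₀ > 0` such that for all `d ≥ d₀`
there exist `c > 0` and `n₀` such that for every `n ≥ n₀` and every fixed `S ⊆ L ∪ R` with
`|S∩L|, |S∩R| ≤ p·(log d/d)·n`, the probability that `G^bip_{n,d}` contains an independent set
`S'` with `|S'∩S∩L| ≥ ε·(log d/d)·n` and `|S'∩S∩R| ≥ ε·(log d/d)·n` is at most `exp(−c·n)`. -/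
theorem stmt4 (ε p : ℝ) (hε : 0 < ε) (hp : 0 < p) :
    ∃ d₀ : ℝ, 0 < d₀ ∧ ∀ d : ℝ, d₀ ≤ d →
      ∃ c : ℝ, 0 < c ∧ ∃ n₀ : ℕ, ∀ n : ℕ, n₀ ≤ n →
        ∀ S : Set (Vtx n),
          ((leftPart S).ncard : ℝ) ≤ p * (Real.log d / d) * n →
          ((rightPart S).ncard : ℝ) ≤ p * (Real.log d / d) * n →
          edgeMeasure n d
              {A | ∃ S' : Set (Vtx n), IsIndepSet n A S' ∧
                ε * (Real.log d / d) * n ≤ ((leftPart (S' ∩ S)).ncard : ℝ) ∧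
                ε * (Real.log d / d) * n ≤ ((rightPart (S' ∩ S)).ncard : ℝ)}
            ≤ ENNReal.ofReal (Real.exp (-c * n)) := by
  classical
  have hlog2 : 0 < Real.log 2 := Real.log_pos one_lt_two
  refine ⟨Real.exp (4 * p * Real.log 2 / ε ^ 2 + 1), Real.exp_pos _, fun d hd => ?_⟩
  have hexp_pos : 0 < 4 * p * Real.log 2 / ε ^ 2 + 1 := by positivity
  have hd1 : 1 < d := by
    calc (1:ℝ) = Real.exp 0 := (Real.exp_zero).symm
    _ < Real.exp (4 * p * Real.log 2 / ε ^ 2 + 1) := Real.exp_lt_exp.mpr hexp_pos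
    _ ≤ d := hd
  have hd0 : 0 < d := lt_trans one_pos hd1
  have hlogd : 4 * p * Real.log 2 / ε ^ 2 + 1 ≤ Real.log d := by
    have := Real.log_le_log (Real.exp_pos _) hd
    rwa [Real.log_exp] at this
  have hlogd_pos : 0 < Real.log d := Real.log_pos hd1
  refine ⟨ε ^ 2 * (Real.log d) ^ 2 / (2 * d), by positivity, ⌈d⌉₊, fun n hn S hSL hSR => ?_⟩
  set c : ℝ := ε ^ 2 * (Real.log d) ^ 2 / (2 * d) with hc
  have hdn : d ≤ n := le_trans (Nat.le_ceil d) (Nat.cast_le.mpr hn)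
  have hnpos : (0:ℝ) < n := lt_of_lt_of_le hd0 hdn
  set q : ℝ := d / n with hqdef
  have hq0 : 0 ≤ q := div_nonneg hd0.le hnpos.le
  have hq1 : q ≤ 1 := (div_le_one hnpos).mpr hdn
  set L : ℝ := Real.log d / d with hLdef
  have hL0 : 0 < L := div_pos hlogd_pos hd0
  set x : ℝ := ε * L * n with hxdef
  have hx0 : 0 < x := by positivity
  set a : ℕ := ⌈x⌉₊ with hadef
  have hax : x ≤ a := Nat.le_ceil x
  set SLfin : Finset (Fin n) := Finset.univ.filter (fun i => Sum.inl i ∈ S) with hSLfin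
  set SRfin : Finset (Fin n) := Finset.univ.filter (fun j => Sum.inr j ∈ S) with hSRfin
  have hSLcard : ((leftPart S).ncard : ℝ) = SLfin.card := by
    rw [leftPart_ncard_eq]
    congr 1
    rw [show {i : Fin n | Sum.inl i ∈ S} = ↑SLfin by ext i; simp [hSLfin], Set.ncard_coe_finset]
  have hSRcard : ((rightPart S).ncard : ℝ) = SRfin.card := by
    rw [rightPart_ncard_eq]
    congr 1
    rw [show {j : Fin n | Sum.inr j ∈ S} = ↑SRfin by ext j; simp [hSRfin], Set.ncard_coe_finset]
  set P : Finset (Finset (Fin n) × Finset (Fin n)) :=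
    (SLfin.powerset ×ˢ SRfin.powerset).filter (fun pr => pr.1.card = a ∧ pr.2.card = a) with hP
  set E : Finset (Fin n) × Finset (Fin n) → Set (Fin (n * n) → Bool) := fun pr =>
    {A | ∀ e ∈ (pr.1 ×ˢ pr.2).image (finProdFinEquiv : Fin n × Fin n ≃ Fin (n * n)),
      A e = false} with hE
  -- inclusion into the union of cylinder events
  have hsub : {A | ∃ S' : Set (Vtx n), IsIndepSet n A S' ∧
        ε * (Real.log d / d) * n ≤ ((leftPart (S' ∩ S)).ncard : ℝ) ∧
        ε * (Real.log d / d) * n ≤ ((rightPart (S' ∩ S)).ncard : ℝ)} ⊆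
      ⋃ pr ∈ P, E pr := by
    rintro A ⟨S', hind, hL', hR'⟩
    set TL : Finset (Fin n) := Finset.univ.filter (fun i => Sum.inl i ∈ S' ∩ S) with hTL
    set TR : Finset (Fin n) := Finset.univ.filter (fun j => Sum.inr j ∈ S' ∩ S) with hTR
    have hTLc : a ≤ TL.card := by
      apply Nat.ceil_le.mpr
      calc x ≤ ((leftPart (S' ∩ S)).ncard : ℝ) := hL'
      _ = TL.card := by
        rw [leftPart_ncard_eq]
        norm_cast
        rw [show {i : Fin n | Sum.inl i ∈ S' ∩ S} = ↑TL by ext i; simp [hTL],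
          Set.ncard_coe_finset]
    have hTRc : a ≤ TR.card := by
      apply Nat.ceil_le.mpr
      calc x ≤ ((rightPart (S' ∩ S)).ncard : ℝ) := hR'
      _ = TR.card := by
        rw [rightPart_ncard_eq]
        norm_cast
        rw [show {j : Fin n | Sum.inr j ∈ S' ∩ S} = ↑TR by ext j; simp [hTR],
          Set.ncard_coe_finset]
    obtain ⟨X, hXsub, hXcard⟩ := TL.exists_subset_card_eq hTLc
    obtain ⟨Y, hYsub, hYcard⟩ := TR.exists_subset_card_eq hTRc
    have hXmem : ∀ i ∈ X, Sum.inl i ∈ S' ∩ S := by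
      intro i hi
      have := hXsub hi
      simpa [hTL] using this
    have hYmem : ∀ j ∈ Y, Sum.inr j ∈ S' ∩ S := by
      intro j hj
      have := hYsub hj
      simpa [hTR] using this
    apply Set.mem_biUnion (show (X, Y) ∈ P from ?_)
    · intro e he
      simp only [Finset.mem_image, Finset.mem_product] at he
      obtain ⟨⟨i, j⟩, ⟨hi, hj⟩, rfl⟩ := he
      have hadj := hind _ (hXmem i hi).1 _ (hYmem j hj).1
      simpa [adjB] using hadj
    · simp only [hP, Finset.mem_filter, Finset.mem_product, Finset.mem_powerset]
      exact ⟨⟨fun i hi => by simp [hSLfin, (hXmem i hi).2],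
        fun j hj => by simp [hSRfin, (hYmem j hj).2]⟩, hXcard, hYcard⟩
  -- measure of each cylinder event
  have hEmeas : ∀ pr ∈ P, edgeMeasure n d (E pr) = ENNReal.ofReal (1 - q) ^ (a * a) := by
    intro pr hpr
    have hcard : ((pr.1 ×ˢ pr.2).image (finProdFinEquiv : Fin n × Fin n ≃ Fin (n * n))).card
        = a * a := by
      rw [Finset.card_image_of_injective _ (Equiv.injective _), Finset.card_product]
      simp only [hP, Finset.mem_filter] at hpr
      rw [hpr.2.1, hpr.2.2]
    rw [hE]
    rw [cylinder_measure n d hq0 hq1, hcard]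
  -- put the chain together
  have hchain : edgeMeasure n d {A | ∃ S' : Set (Vtx n), IsIndepSet n A S' ∧
        ε * (Real.log d / d) * n ≤ ((leftPart (S' ∩ S)).ncard : ℝ) ∧
        ε * (Real.log d / d) * n ≤ ((rightPart (S' ∩ S)).ncard : ℝ)} ≤
      (P.card : ℝ≥0∞) * ENNReal.ofReal (1 - q) ^ (a * a) := by
    calc edgeMeasure n d _ ≤ edgeMeasure n d (⋃ pr ∈ P, E pr) := measure_mono hsub
    _ ≤ ∑ pr ∈ P, edgeMeasure n d (E pr) := measure_biUnion_finset_le P E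
    _ = ∑ _pr ∈ P, ENNReal.ofReal (1 - q) ^ (a * a) := Finset.sum_congr rfl hEmeas
    _ = (P.card : ℝ≥0∞) * ENNReal.ofReal (1 - q) ^ (a * a) := by
      rw [Finset.sum_const, nsmul_eq_mul]
  refine le_trans hchain ?_
  -- counting bound
  set k : ℕ := SLfin.card + SRfin.card with hk
  have hPcard : (P.card : ℝ) ≤ 2 ^ k := by
    have h1 : P.card ≤ (SLfin.powerset ×ˢ SRfin.powerset).card := Finset.card_filter_le _ _
    have h2 : (SLfin.powerset ×ˢ SRfin.powerset).card = 2 ^ k := by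
      rw [Finset.card_product, Finset.card_powerset, Finset.card_powerset, hk, pow_add]
    calc (P.card : ℝ) ≤ ((2 ^ k : ℕ) : ℝ) := by exact_mod_cast h2 ▸ h1
    _ = 2 ^ k := by push_cast; ring
  -- the key real inequality
  have hkR : (k : ℝ) ≤ 2 * p * L * n := by
    push_cast [hk]
    rw [← hSLcard, ← hSRcard]
    calc ((leftPart S).ncard : ℝ) + ((rightPart S).ncard : ℝ)
        ≤ p * L * n + p * L * n := add_le_add hSL hSR
    _ = 2 * p * L * n := by ring
  have h4plog : 4 * p * Real.log 2 + ε ^ 2 ≤ ε ^ 2 * Real.log d := by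
    have h := mul_le_mul_of_nonneg_left hlogd (le_of_lt (by positivity : (0:ℝ) < ε ^ 2))
    have hε2 : (0:ℝ) < ε ^ 2 := by positivity
    calc 4 * p * Real.log 2 + ε ^ 2 = ε ^ 2 * (4 * p * Real.log 2 / ε ^ 2 + 1) := by
          field_simp
    _ ≤ ε ^ 2 * Real.log d := h
  have hkey : (k : ℝ) * Real.log 2 + ((a : ℝ) * (a : ℝ)) * (-q) ≤ -c * n := by
    have hqa : ε ^ 2 * (Real.log d) ^ 2 / d * n ≤ q * ((a : ℝ) * (a : ℝ)) := by
      have haa : x * x ≤ (a : ℝ) * (a : ℝ) :=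
        mul_le_mul hax hax hx0.le (le_trans hx0.le hax)
      have hqx : q * (x * x) = ε ^ 2 * (Real.log d) ^ 2 / d * n := by
        rw [hxdef, hqdef, hLdef]
        field_simp
      calc ε ^ 2 * (Real.log d) ^ 2 / d * n = q * (x * x) := hqx.symm
      _ ≤ q * ((a : ℝ) * (a : ℝ)) := mul_le_mul_of_nonneg_left haa hq0
    have h1 : (k : ℝ) * Real.log 2 ≤ 2 * p * L * n * Real.log 2 :=
      mul_le_mul_of_nonneg_right hkR hlog2.le
    have h2 : 2 * p * L * n * Real.log 2 - ε ^ 2 * (Real.log d) ^ 2 / d * n ≤ -c * n := by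
      rw [hc, hLdef]
      rw [show 2 * p * (Real.log d / d) * n * Real.log 2 - ε ^ 2 * (Real.log d) ^ 2 / d * n
          = n * ((2 * p * Real.log 2 * Real.log d - ε ^ 2 * (Real.log d) ^ 2) / d) by
            field_simp,
        show -(ε ^ 2 * (Real.log d) ^ 2 / (2 * d)) * n
          = n * (-(ε ^ 2 * (Real.log d) ^ 2 / 2) / d) by field_simp]
      apply mul_le_mul_of_nonneg_left _ hnpos.le
      apply div_le_div_of_nonneg_right _ hd0.le
      have h5 : 4 * p * Real.log 2 ≤ ε ^ 2 * Real.log d := by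
        have := sq_nonneg ε
        linarith
      have h6 : 4 * p * Real.log 2 * Real.log d ≤ ε ^ 2 * Real.log d * Real.log d :=
        mul_le_mul_of_nonneg_right h5 hlogd_pos.le
      nlinarith [h6]
    linarith
  -- conclude in ℝ≥0∞
  have h1mq : 1 - q ≤ Real.exp (-q) := by linarith [Real.add_one_le_exp (-q)]
  calc (P.card : ℝ≥0∞) * ENNReal.ofReal (1 - q) ^ (a * a)
      ≤ ENNReal.ofReal ((2:ℝ) ^ k) * ENNReal.ofReal (Real.exp (-q)) ^ (a * a) := by
        apply mul_le_mul'
        · rw [show ((P.card : ℝ≥0∞)) = ENNReal.ofReal ((P.card : ℕ) : ℝ) by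
            rw [ENNReal.ofReal_natCast]]
          exact ENNReal.ofReal_le_ofReal hPcard
        · exact pow_le_pow_left' (ENNReal.ofReal_le_ofReal h1mq) _
  _ = ENNReal.ofReal ((2:ℝ) ^ k * Real.exp (-q) ^ (a * a)) := by
        rw [← ENNReal.ofReal_pow (Real.exp_nonneg _),
          ← ENNReal.ofReal_mul (by positivity)]
  _ ≤ ENNReal.ofReal (Real.exp (-c * n)) := by
        apply ENNReal.ofReal_le_ofReal
        rw [show (2:ℝ) ^ k = Real.exp ((k : ℝ) * Real.log 2) by
            rw [Real.exp_nat_mul, Real.exp_log two_pos],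
          show Real.exp (-q) ^ (a * a) = Real.exp (((a * a : ℕ) : ℝ) * (-q)) by
            rw [Real.exp_nat_mul],
          ← Real.exp_add]
        apply Real.exp_le_exp.mpr
        push_cast
        linarith [hkey]
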